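/- Let C_• ⊆ dg(Δⁿ)_• be the subcomplex generated by all injective necklace maps g: U ↪ Δⁿ other than id_{Δⁿ} and δ_j (for a fixed 0 < j < n). Then the quotient complex dg(Δⁿ)_•/C_• is isomorphic to the complex with k in degrees n−1 and n−2 and the identity as the only nonzero differential; in particular it is acyclic and degreewise free, so the inclusion C_• ↪ dg(Δⁿ)_• is a split monomorphism of chain complexes. -/

import Mathlib

def IsNeck (p : ℕ) (T : Finset ℕ) : Prop :=
  T ⊆ Finset.range (p + 1) ∧ 0 ∈ T ∧ p ∈ T

/-- An injective necklace map `g : (U,q) ↪ (T,p)` of dimension `n`, encoded by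
its image data: `V = g([q])` is the image of the vertices and `W = g(U)` the
image of the joints; then `T ⊆ W ⊆ V ⊆ [p]`, `0, p ∈ W`, and
`dim U = |V \ W| = n`.  (The strictly monotone endpoint-preserving map `g` is
recovered as the unique order isomorphism `[q] ≅ V`, and `U = g⁻¹(W)`.) -/
structure Idx (p : ℕ) (T : Finset ℕ) (n : ℕ) : Type where
  V : Finset ℕ
  W : Finset ℕ
  hTW : T ⊆ W
  hWV : W ⊆ V
  hV : V ⊆ Finset.range (p + 1)
  h0 : 0 ∈ W
  hp : p ∈ W
  hdim : (V \ W).card = n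

namespace Idx

variable {p : ℕ} {T : Finset ℕ} {n : ℕ}

/-- The face `g ∘ δ_{i_j}` of an injective necklace map, removing the vertex
`i ∈ V \ W`. -/
def face (x : Idx p T (n + 1)) (i : ℕ) (hi : i ∈ x.V \ x.W) : Idx p T n where
  V := x.V.erase i
  W := x.W
  hTW := x.hTW
  hWV := Finset.subset_erase.mpr ⟨x.hWV, (Finset.mem_sdiff.mp hi).2⟩
  hV := fun a ha => x.hV (Finset.mem_of_mem_erase ha)
  h0 := x.h0
  hp := x.hp
  hdim := by
    have h1 : x.V.erase i \ x.W = (x.V \ x.W).erase i := by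
      ext a
      simp only [Finset.mem_erase, Finset.mem_sdiff]
      tauto
    rw [h1, Finset.card_erase_of_mem hi, x.hdim]
    omega

/-- The inert restriction `g ∘ ν` of an injective necklace map, adding the
vertex `i ∈ V \ W` as a joint. -/
def inert (x : Idx p T (n + 1)) (i : ℕ) (hi : i ∈ x.V \ x.W) : Idx p T n where
  V := x.V
  W := insert i x.W
  hTW := x.hTW.trans (Finset.subset_insert _ _)
  hWV := Finset.insert_subset_iff.mpr ⟨(Finset.mem_sdiff.mp hi).1, x.hWV⟩
  hV := x.hV
  h0 := Finset.mem_insert_of_mem x.h0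
  hp := Finset.mem_insert_of_mem x.hp
  hdim := by
    have h1 : x.V \ insert i x.W = (x.V \ x.W).erase i := by
      ext a
      simp only [Finset.mem_erase, Finset.mem_sdiff, Finset.mem_insert]
      tauto
    rw [h1, Finset.card_erase_of_mem hi, x.hdim]
    omega

theorem ext' {x y : Idx p T n} (hV : x.V = y.V) (hW : x.W = y.W) : x = y := by
  cases x; cases y; cases hV; cases hW; rfl

@[simp] lemma face_V (x : Idx p T (n+1)) (i hi) : (x.face i hi).V = x.V.erase i := rfl
@[simp] lemma face_W (x : Idx p T (n+1)) (i hi) : (x.face i hi).W = x.W := rfl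
@[simp] lemma inert_V (x : Idx p T (n+1)) (i hi) : (x.inert i hi).V = x.V := rfl
@[simp] lemma inert_W (x : Idx p T (n+1)) (i hi) : (x.inert i hi).W = insert i x.W := rfl

lemma face_sdiff (x : Idx p T (n+1)) (i : ℕ) (hi : i ∈ x.V \ x.W) :
    (x.face i hi).V \ (x.face i hi).W = (x.V \ x.W).erase i := by
  ext a
  simp only [face_V, face_W, Finset.mem_erase, Finset.mem_sdiff]
  tauto

lemma inert_sdiff (x : Idx p T (n+1)) (i : ℕ) (hi : i ∈ x.V \ x.W) :
    (x.inert i hi).V \ (x.inert i hi).W = (x.V \ x.W).erase i := by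
  ext a
  simp only [inert_V, inert_W, Finset.mem_erase, Finset.mem_sdiff, Finset.mem_insert]
  tauto

lemma face_face (x : Idx p T (n+2)) (i i' : ℕ) (hi : i ∈ x.V \ x.W)
    (hi' : i' ∈ x.V \ x.W) (h1 : i' ∈ (x.face i hi).V \ (x.face i hi).W)
    (h2 : i ∈ (x.face i' hi').V \ (x.face i' hi').W) :
    (x.face i hi).face i' h1 = (x.face i' hi').face i h2 :=
  ext' (Finset.erase_right_comm) rfl

lemma inert_inert (x : Idx p T (n+2)) (i i' : ℕ) (hi : i ∈ x.V \ x.W)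
    (hi' : i' ∈ x.V \ x.W) (h1 : i' ∈ (x.inert i hi).V \ (x.inert i hi).W)
    (h2 : i ∈ (x.inert i' hi').V \ (x.inert i' hi').W) :
    (x.inert i hi).inert i' h1 = (x.inert i' hi').inert i h2 :=
  ext' rfl (Finset.insert_comm _ _ _)

lemma face_inert (x : Idx p T (n+2)) (i i' : ℕ) (hi : i ∈ x.V \ x.W)
    (hi' : i' ∈ x.V \ x.W) (h1 : i' ∈ (x.inert i hi).V \ (x.inert i hi).W)
    (h2 : i ∈ (x.face i' hi').V \ (x.face i' hi').W) :
    (x.inert i hi).face i' h1 = (x.face i' hi').inert i h2 :=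
  ext' rfl rfl

end Idx

/-- The boundary of a generator: `∂(g) = Σ_{j=1}^{n+1} (-1)^{j-1}
(g ∘ δ_{i_j} - g ∘ ν_{i_j, q - i_j})`, the sum running over the complement
`V \ W = {i_1 < i_2 < …}`. -/
noncomputable def bnd (k : Type*) [CommRing k] {p : ℕ} {T : Finset ℕ} {n : ℕ}
    (x : Idx p T (n + 1)) : Idx p T n →₀ k :=
  ∑ i ∈ (x.V \ x.W).attach,
    ((-1 : k) ^ ((x.V \ x.W).filter (fun y => y < (i : ℕ))).card) •
      (Finsupp.single (x.face i.1 i.2) (1 : k) -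
        Finsupp.single (x.inert i.1 i.2) (1 : k))

/-- The differential `∂ : dg(T)_{n+1} → dg(T)_n` of the dg complex of the
necklace `(T,p)`, where `dg(T)_m` is the free `k`-module on injective necklace
maps into `T` of dimension `m`. -/
noncomputable def Dmap (k : Type*) [CommRing k] (p : ℕ) (T : Finset ℕ) (n : ℕ) :
    (Idx p T (n + 1) →₀ k) →ₗ[k] (Idx p T n →₀ k) :=
  Finsupp.lsum k fun x => LinearMap.toSpanSingleton k _ (bnd k x)

section
variable (k : Type*) [CommRing k] {p : ℕ} {T : Finset ℕ} {n : ℕ}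

/-- dite-packaged term of the boundary. -/
noncomputable def tm (x : Idx p T (n + 1)) (i : ℕ) : Idx p T n →₀ k :=
  if h : i ∈ x.V \ x.W then
    ((-1 : k) ^ ((x.V \ x.W).filter (fun y => y < i)).card) •
      (Finsupp.single (x.face i h) (1 : k) - Finsupp.single (x.inert i h) (1 : k))
  else 0

lemma bnd_eq (x : Idx p T (n + 1)) : bnd k x = ∑ i ∈ x.V \ x.W, tm k x i := by
  rw [← Finset.sum_attach (x.V \ x.W) (tm k x)]
  exact Finset.sum_congr rfl fun i _ => by rw [tm, dif_pos i.2]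

lemma Dmap_single (g : Idx p T (n + 1)) (c : k) :
    Dmap k p T n (Finsupp.single g c) = c • bnd k g := by
  rw [Dmap, Finsupp.lsum_single, LinearMap.toSpanSingleton_apply]

lemma Dmap_tm (x : Idx p T (n + 2)) (i : ℕ) :
    Dmap k p T n (tm k x i) =
      if h : i ∈ x.V \ x.W then
        ((-1 : k) ^ ((x.V \ x.W).filter (fun y => y < i)).card) •
          (bnd k (x.face i h) - bnd k (x.inert i h))
      else 0 := by
  rw [tm]
  split
  · rw [map_smul, map_sub, Dmap_single, Dmap_single, one_smul, one_smul]
  · rw [map_zero]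

end

section Sign
variable {k : Type*} [CommRing k]

lemma neg_one_pow_congr' {a b : ℕ} (h : a % 2 = b % 2) : (-1 : k) ^ a = (-1) ^ b := by
  rw [neg_one_pow_eq_pow_mod_two, h, ← neg_one_pow_eq_pow_mod_two]

lemma erase_filter_card_lt (S : Finset ℕ) {a b : ℕ} (ha : a ∈ S) (hab : a < b) :
    ((S.erase a).filter (fun y => y < b)).card + 1 = (S.filter (fun y => y < b)).card := by
  rw [Finset.filter_erase, Finset.card_erase_of_mem (by simp [ha, hab])]
  have : 0 < (S.filter (fun y => y < b)).card :=
    Finset.card_pos.mpr ⟨a, by simp [ha, hab]⟩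
  omega

lemma erase_filter_card_ge (S : Finset ℕ) {a b : ℕ} (hab : ¬ a < b) :
    ((S.erase a).filter (fun y => y < b)).card = (S.filter (fun y => y < b)).card := by
  rw [Finset.filter_erase, Finset.erase_eq_of_notMem (by simp [hab])]

lemma sign_anti (S : Finset ℕ) {i i' : ℕ} (hi : i ∈ S) (hi' : i' ∈ S) (hne : i ≠ i') :
    (-1 : k) ^ (S.filter (fun y => y < i)).card *
        (-1) ^ (((S.erase i).filter (fun y => y < i')).card) =
      -((-1 : k) ^ (S.filter (fun y => y < i')).card *
        (-1) ^ (((S.erase i').filter (fun y => y < i)).card)) := by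
  rw [← pow_add, ← pow_add, ← mul_neg_one ((-1 : k) ^ _), ← pow_succ]
  apply neg_one_pow_congr'
  rcases lt_or_gt_of_ne hne with h | h
  · have h1 := erase_filter_card_lt S hi h
    have h2 := erase_filter_card_ge S (lt_asymm h)
    omega
  · have h1 := erase_filter_card_lt S hi' h
    have h2 := erase_filter_card_ge S (lt_asymm h)
    omega

end Sign

section DD
variable (k : Type*) [CommRing k] {p : ℕ} {T : Finset ℕ} {n : ℕ}

/-- The second-order boundary term. -/
noncomputable def GG (x : Idx p T (n + 2)) (i i' : ℕ) : Idx p T n →₀ k :=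
  if h : i ∈ x.V \ x.W then
    ((-1 : k) ^ ((x.V \ x.W).filter (fun y => y < i)).card) •
      (tm k (x.face i h) i' - tm k (x.inert i h) i')
  else 0

lemma GG_anti (x : Idx p T (n + 2)) {i i' : ℕ} (hi : i ∈ x.V \ x.W)
    (hi' : i' ∈ x.V \ x.W) (hne : i ≠ i') : GG k x i i' + GG k x i' i = 0 := by
  have hf1 : i' ∈ (x.face i hi).V \ (x.face i hi).W := by
    rw [Idx.face_sdiff]; exact Finset.mem_erase.mpr ⟨hne.symm, hi'⟩
  have hn1 : i' ∈ (x.inert i hi).V \ (x.inert i hi).W := by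
    rw [Idx.inert_sdiff]; exact Finset.mem_erase.mpr ⟨hne.symm, hi'⟩
  have hf2 : i ∈ (x.face i' hi').V \ (x.face i' hi').W := by
    rw [Idx.face_sdiff]; exact Finset.mem_erase.mpr ⟨hne, hi⟩
  have hn2 : i ∈ (x.inert i' hi').V \ (x.inert i' hi').W := by
    rw [Idx.inert_sdiff]; exact Finset.mem_erase.mpr ⟨hne, hi⟩
  rw [GG, GG, dif_pos hi, dif_pos hi', tm, tm, tm, tm,
    dif_pos hf1, dif_pos hn1, dif_pos hf2, dif_pos hn2,
    Idx.face_sdiff x i hi, Idx.inert_sdiff x i hi,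
    Idx.face_sdiff x i' hi', Idx.inert_sdiff x i' hi',
    Idx.face_face x i i' hi hi' hf1 hf2,
    Idx.inert_inert x i i' hi hi' hn1 hn2,
    Idx.face_inert x i i' hi hi' hn1 hf2,
    ← Idx.face_inert x i' i hi' hi hn2 hf1]
  have hs := sign_anti (k := k) (x.V \ x.W) hi hi' hne
  set a := (-1 : k) ^ ((x.V \ x.W).filter (fun y => y < i)).card with ha
  set b := (-1 : k) ^ (((x.V \ x.W).erase i).filter (fun y => y < i')).card with hb
  set c := (-1 : k) ^ ((x.V \ x.W).filter (fun y => y < i')).card with hc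
  set d := (-1 : k) ^ (((x.V \ x.W).erase i').filter (fun y => y < i)).card with hd
  set A := Finsupp.single (M := k) ((x.face i' hi').face i hf2) 1
  set B := Finsupp.single (M := k) ((x.face i' hi').inert i hf2) 1
  set C := Finsupp.single (M := k) ((x.inert i' hi').face i hn2) 1
  set D := Finsupp.single (M := k) ((x.inert i' hi').inert i hn2) 1
  match_scalars <;> first
    | linear_combination hs
    | linear_combination -hs

lemma Dmap_bnd (x : Idx p T (n + 2)) : Dmap k p T n (bnd k x) = 0 := by
  rw [bnd_eq, map_sum]
  have step : ∀ i ∈ x.V \ x.W,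
      Dmap k p T n (tm k x i) = ∑ i' ∈ (x.V \ x.W).erase i, GG k x i i' := by
    intro i hi
    rw [Dmap_tm, dif_pos hi, bnd_eq, bnd_eq,
      Idx.face_sdiff x i hi, Idx.inert_sdiff x i hi, ← Finset.sum_sub_distrib,
      Finset.smul_sum]
    exact Finset.sum_congr rfl fun i' _ => by rw [GG, dif_pos hi]
  rw [Finset.sum_congr rfl step, Finset.sum_sigma']
  rw [Finset.sum_bij' (t := (x.V \ x.W).offDiag)
    (i := fun q _ => (q.1, q.2)) (j := fun q _ => ⟨q.1, q.2⟩)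
    (g := fun q => GG k x q.1 q.2)
    (hi := ?_) (hj := ?_) (left_neg := ?_) (right_neg := ?_) (h := ?_)]
  · apply Finset.sum_involution (g := fun q _ => (q.2, q.1))
    · intro q hq
      have h := Finset.mem_offDiag.mp hq
      exact GG_anti k x h.1 h.2.1 h.2.2
    · intro q hq h
      have hne := (Finset.mem_offDiag.mp hq).2.2
      exact fun hcon => hne (congrArg Prod.fst hcon).symm
    · intro q hq
      have h := Finset.mem_offDiag.mp hq
      exact Finset.mem_offDiag.mpr ⟨h.2.1, h.1, h.2.2.symm⟩
    · intro q hq; rfl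
  · intro q hq
    simp only [Finset.mem_sigma, Finset.mem_erase] at hq
    exact Finset.mem_offDiag.mpr ⟨hq.1, hq.2.2, fun h => hq.2.1 h.symm⟩
  · intro q hq
    have h := Finset.mem_offDiag.mp hq
    simp only [Finset.mem_sigma, Finset.mem_erase]
    exact ⟨h.1, fun hc => h.2.2 hc.symm, h.2.1⟩
  · intro q hq; rfl
  · intro q hq; rfl
  · intro q hq; rfl

end DD

section NJ

variable {n j : ℕ}

lemma diff_id (hn : 0 < n) :
    Finset.range (n + 1) \ ({0, n} : Finset ℕ) = Finset.Ioo 0 n := by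
  ext a
  simp only [Finset.mem_sdiff, Finset.mem_range, Finset.mem_insert,
    Finset.mem_singleton, Finset.mem_Ioo]
  omega

lemma diff_dj (h0 : 0 < j) (hj : j < n) :
    (Finset.range (n + 1)).erase j \ ({0, n} : Finset ℕ) = (Finset.Ioo 0 n).erase j := by
  ext a
  simp only [Finset.mem_sdiff, Finset.mem_erase, Finset.mem_range, Finset.mem_insert,
    Finset.mem_singleton, Finset.mem_Ioo]
  omega

lemma card_diff_id (hn : 0 < n) :
    (Finset.range (n + 1) \ ({0, n} : Finset ℕ)).card = n - 1 := by
  rw [diff_id hn, Nat.card_Ioo]; omega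

lemma card_diff_dj (h0 : 0 < j) (hj : j < n) :
    ((Finset.range (n + 1)).erase j \ ({0, n} : Finset ℕ)).card = n - 2 := by
  rw [diff_dj h0 hj, Finset.card_erase_of_mem (by simp [Finset.mem_Ioo]; omega),
    Nat.card_Ioo]
  omega

def idI (hn : 0 < n) {m : ℕ} (hm : n - 1 = m) : Idx n ({0, n} : Finset ℕ) m where
  V := Finset.range (n + 1)
  W := {0, n}
  hTW := Finset.Subset.refl _
  hWV := by
    intro a ha
    simp only [Finset.mem_insert, Finset.mem_singleton] at ha
    rcases ha with rfl | rfl <;> simp [Finset.mem_range]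
  hV := Finset.Subset.refl _
  h0 := by simp
  hp := by simp
  hdim := by rw [card_diff_id hn]; exact hm

def djI (h0 : 0 < j) (hj : j < n) {m : ℕ} (hm : n - 2 = m) :
    Idx n ({0, n} : Finset ℕ) m where
  V := (Finset.range (n + 1)).erase j
  W := {0, n}
  hTW := Finset.Subset.refl _
  hWV := by
    intro a ha
    simp only [Finset.mem_insert, Finset.mem_singleton] at ha
    rcases ha with rfl | rfl <;> simp [Finset.mem_erase, Finset.mem_range] <;> omega
  hV := Finset.erase_subset _ _
  h0 := by simp
  hp := by simp
  hdim := by rw [card_diff_dj h0 hj]; exact hm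

@[simp] lemma idI_V (hn : 0 < n) {m} (hm : n - 1 = m) :
    (idI hn hm : Idx n ({0, n} : Finset ℕ) m).V = Finset.range (n + 1) := rfl
@[simp] lemma idI_W (hn : 0 < n) {m} (hm : n - 1 = m) :
    (idI hn hm : Idx n ({0, n} : Finset ℕ) m).W = {0, n} := rfl
@[simp] lemma djI_V (h0 : 0 < j) (hj : j < n) {m} (hm : n - 2 = m) :
    (djI h0 hj hm : Idx n ({0, n} : Finset ℕ) m).V = (Finset.range (n + 1)).erase j := rfl
@[simp] lemma djI_W (h0 : 0 < j) (hj : j < n) {m} (hm : n - 2 = m) :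
    (djI h0 hj hm : Idx n ({0, n} : Finset ℕ) m).W = {0, n} := rfl

lemma degA {m : ℕ} (g : Idx n ({0, n} : Finset ℕ) m) (hn : 0 < n)
    (hV : g.V = Finset.range (n + 1)) (hW : g.W = ({0, n} : Finset ℕ)) : n - 1 = m := by
  have h := g.hdim
  rw [hV, hW, card_diff_id hn] at h
  exact h

lemma degB {m : ℕ} (g : Idx n ({0, n} : Finset ℕ) m) (h0 : 0 < j) (hj : j < n)
    (hV : g.V = (Finset.range (n + 1)).erase j) (hW : g.W = ({0, n} : Finset ℕ)) :
    n - 2 = m := by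
  have h := g.hdim
  rw [hV, hW, card_diff_dj h0 hj] at h
  exact h

lemma inert_W_ne {m : ℕ} (g : Idx n ({0, n} : Finset ℕ) (m + 1)) (i : ℕ)
    (hi : i ∈ g.V \ g.W) : (g.inert i hi).W ≠ ({0, n} : Finset ℕ) := by
  intro h
  simp only [Idx.inert_W] at h
  have hiW : i ∈ ({0, n} : Finset ℕ) := h ▸ Finset.mem_insert_self i g.W
  exact (Finset.mem_sdiff.mp hi).2 (g.hTW hiW)

lemma face_V_ne {m : ℕ} (g : Idx n ({0, n} : Finset ℕ) (m + 1)) (i : ℕ)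
    (hi : i ∈ g.V \ g.W) : (g.face i hi).V ≠ Finset.range (n + 1) := by
  intro h
  simp only [Idx.face_V] at h
  have : i ∈ g.V.erase i := h ▸ g.hV (Finset.mem_sdiff.mp hi).1
  exact (Finset.mem_erase.mp this).1 rfl

lemma face_special (hj : j < n) {m : ℕ} (g : Idx n ({0, n} : Finset ℕ) (m + 1)) (i : ℕ)
    (hi : i ∈ g.V \ g.W) (hV : (g.face i hi).V = (Finset.range (n + 1)).erase j)
    (hW : (g.face i hi).W = ({0, n} : Finset ℕ)) :
    i = j ∧ g.V = Finset.range (n + 1) ∧ g.W = ({0, n} : Finset ℕ) := by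
  simp only [Idx.face_V, Idx.face_W] at hV hW
  have hiV := (Finset.mem_sdiff.mp hi).1
  have hij : i = j := by
    by_contra hne
    have h1 : i ∈ (Finset.range (n + 1)).erase j :=
      Finset.mem_erase.mpr ⟨hne, g.hV hiV⟩
    rw [← hV] at h1
    exact (Finset.mem_erase.mp h1).1 rfl
  subst hij
  refine ⟨rfl, ?_, hW⟩
  have h2 := Finset.insert_erase hiV
  rw [← h2, hV, Finset.insert_erase (by simp [Finset.mem_range]; omega)]

end NJ

section K

variable {k : Type*} [CommRing k] {n j : ℕ}

lemma filter_lt_j (h0 : 0 < j) (hj : j < n) :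
    ((Finset.range (n + 1) \ ({0, n} : Finset ℕ)).filter (fun y => y < j)).card
      = j - 1 := by
  have h : (Finset.range (n + 1) \ ({0, n} : Finset ℕ)).filter (fun y => y < j)
      = Finset.Ioo 0 j := by
    ext a
    simp only [Finset.mem_filter, Finset.mem_sdiff, Finset.mem_range,
      Finset.mem_insert, Finset.mem_singleton, Finset.mem_Ioo]
    omega
  rw [h, Nat.card_Ioo]; omega

lemma idx_empty (hn : 0 < n) {M : ℕ} (hM : n ≤ M) (g : Idx n ({0, n} : Finset ℕ) M) :
    False := by
  have hsub : g.V \ g.W ⊆ Finset.range (n + 1) \ ({0, n} : Finset ℕ) := by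
    intro a ha
    rw [Finset.mem_sdiff] at ha ⊢
    exact ⟨g.hV ha.1, fun h => ha.2 (g.hTW h)⟩
  have hc := Finset.card_le_card hsub
  rw [g.hdim, card_diff_id hn] at hc
  omega

lemma bnd_apply_dj_ne (hn : 0 < n) (h0 : 0 < j) (hj : j < n) {m : ℕ}
    (hm1 : n - 1 = m + 1) (hm0 : n - 2 = m) (g : Idx n ({0, n} : Finset ℕ) (m + 1))
    (hg : g ≠ idI hn hm1) :
    (bnd k g) (djI h0 hj hm0) = 0 := by
  classical
  have hinert : ∀ (i : ℕ) (hi : i ∈ g.V \ g.W), g.inert i hi ≠ djI h0 hj hm0 := by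
    intro i hi h
    exact inert_W_ne g i hi (by rw [h]; rfl)
  rw [bnd, ← Finsupp.applyAddHom_apply, map_sum]
  simp only [Finsupp.applyAddHom_apply]
  apply Finset.sum_eq_zero
  intro i _
  have hface : g.face i.1 i.2 ≠ djI h0 hj hm0 := by
    intro h
    have hs := face_special hj _ i.1 i.2 (by rw [h]; rfl) (by rw [h]; rfl)
    exact hg (Idx.ext' hs.2.1 hs.2.2)
  rw [Finsupp.smul_apply, Finsupp.sub_apply,
    Finsupp.single_apply, if_neg hface, Finsupp.single_apply,
    if_neg (hinert i.1 i.2), sub_zero, smul_zero]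

lemma bnd_apply_dj_id (hn : 0 < n) (h0 : 0 < j) (hj : j < n) {m : ℕ}
    (hm1 : n - 1 = m + 1) (hm0 : n - 2 = m) :
    (bnd k (idI hn hm1 : Idx n ({0, n} : Finset ℕ) (m + 1))) (djI h0 hj hm0)
      = (-1 : k) ^ (j - 1) := by
  classical
  have hinert : ∀ (i : ℕ) (hi : i ∈ (idI hn hm1 : Idx n ({0, n} : Finset ℕ) (m + 1)).V \
      (idI hn hm1 : Idx n ({0, n} : Finset ℕ) (m + 1)).W),
      (idI hn hm1 : Idx n ({0, n} : Finset ℕ) (m + 1)).inert i hi ≠ djI h0 hj hm0 := by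
    intro i hi h
    exact inert_W_ne _ i hi (by rw [h]; rfl)
  rw [bnd, ← Finsupp.applyAddHom_apply, map_sum]
  simp only [Finsupp.applyAddHom_apply]
  have hjmem : j ∈ (idI hn hm1 : Idx n ({0, n} : Finset ℕ) (m + 1)).V \
      (idI hn hm1 : Idx n ({0, n} : Finset ℕ) (m + 1)).W := by
    rw [Finset.mem_sdiff]
    constructor
    · simp only [idI_V, Finset.mem_range]; omega
    · simp only [idI_W, Finset.mem_insert, Finset.mem_singleton]; omega
  rw [Finset.sum_eq_single_of_mem ⟨j, hjmem⟩ (Finset.mem_attach _ _)]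
  · have hface : (idI hn hm1 : Idx n ({0, n} : Finset ℕ) (m + 1)).face j hjmem
        = djI h0 hj hm0 := Idx.ext' rfl rfl
    rw [Finsupp.smul_apply, Finsupp.sub_apply,
      Finsupp.single_apply, if_pos hface, Finsupp.single_apply,
      if_neg (hinert j hjmem), sub_zero, smul_eq_mul, mul_one]
    exact congrArg (fun t => (-1 : k) ^ t) (filter_lt_j h0 hj)
  · intro i _ hne
    have hface : (idI hn hm1 : Idx n ({0, n} : Finset ℕ) (m + 1)).face i.1 i.2
        ≠ djI h0 hj hm0 := by
      intro h
      have hs := face_special hj _ i.1 i.2 (by rw [h]; rfl) (by rw [h]; rfl)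
      exact hne (Subtype.ext hs.1)
    rw [Finsupp.smul_apply, Finsupp.sub_apply,
      Finsupp.single_apply, if_neg hface, Finsupp.single_apply,
      if_neg (hinert i.1 i.2), sub_zero, smul_zero]

lemma Dmap_apply_dj (hn : 0 < n) (h0 : 0 < j) (hj : j < n) {m : ℕ}
    (hm1 : n - 1 = m + 1) (hm0 : n - 2 = m)
    (f : Idx n ({0, n} : Finset ℕ) (m + 1) →₀ k) :
    (Dmap k n {0, n} m f) (djI h0 hj hm0) = (-1 : k) ^ (j - 1) * f (idI hn hm1) := by
  classical
  induction f using Finsupp.induction_linear with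
  | zero => simp
  | add f g hf hg =>
    rw [map_add, Finsupp.add_apply, Finsupp.add_apply, hf, hg]; ring
  | single g c =>
    rw [Dmap_single, Finsupp.smul_apply, Finsupp.single_apply, smul_eq_mul]
    by_cases hg : g = idI hn hm1
    · rw [if_pos hg, hg, bnd_apply_dj_id hn h0 hj hm1 hm0]; ring
    · rw [if_neg hg, bnd_apply_dj_ne hn h0 hj hm1 hm0 g hg, mul_zero, mul_zero]

end K

section Q

variable {k : Type*} [CommRing k]

noncomputable def qEquiv {ι : Type*} (S : Set ι) (x₀ : ι)
    (hmem : ∀ g : ι, g ∉ S ↔ g = x₀) (u : k) (hu : u * u = 1) :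
    ((ι →₀ k) ⧸ Finsupp.supported k k S) ≃ₗ[k] k :=
  LinearEquiv.ofLinear
    (Submodule.liftQ _ (u • (Finsupp.lapply x₀ : (ι →₀ k) →ₗ[k] k)) (by
      intro f hf
      have h := (Finsupp.mem_supported' k f).mp hf x₀ ((hmem x₀).mpr rfl)
      simp [LinearMap.mem_ker, h]))
    ((Finsupp.supported k k S).mkQ ∘ₗ (Finsupp.lsingle x₀) ∘ₗ
      (u • (LinearMap.id : k →ₗ[k] k)))
    (by
      apply LinearMap.ext
      intro c
      simp only [LinearMap.comp_apply, LinearMap.smul_apply, LinearMap.id_apply,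
        Finsupp.lsingle_apply, Submodule.mkQ_apply, Submodule.liftQ_apply,
        Finsupp.lapply_apply, Finsupp.single_eq_same, smul_eq_mul]
      rw [← mul_assoc, hu, one_mul])
    (by
      apply Submodule.linearMap_qext
      apply LinearMap.ext
      intro f
      simp only [LinearMap.comp_apply, Submodule.mkQ_apply, Submodule.liftQ_apply,
        LinearMap.smul_apply, Finsupp.lapply_apply, LinearMap.id_apply,
        Finsupp.lsingle_apply, smul_eq_mul]
      rw [Submodule.Quotient.eq]
      apply (Finsupp.mem_supported' k _).mpr
      intro g hg
      have hgx : g = x₀ := (hmem g).mp hg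
      subst hgx
      rw [Finsupp.sub_apply, Finsupp.single_eq_same, ← mul_assoc, hu, one_mul,
        sub_self])

lemma qEquiv_apply {ι : Type*} (S : Set ι) (x₀ : ι)
    (hmem : ∀ g : ι, g ∉ S ↔ g = x₀) (u : k) (hu : u * u = 1)
    (f : ι →₀ k) :
    qEquiv S x₀ hmem u hu (Submodule.Quotient.mk f) = u * f x₀ := rfl

end Q


/-- The subcomplex `C_• ⊆ dg(Δⁿ)_•` generated by all injective necklace maps
into `Δⁿ` other than `id_{Δⁿ}` (index `V = [n]`, `W = {0,n}`, degree `n-1`) and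
`δ_j` (index `V = [n] \ {j}`, `W = {0,n}`, degree `n-2`). -/
def Csub (k : Type*) [CommRing k] (n j : ℕ) (m : ℕ) :
    Submodule k (Idx n ({0, n} : Finset ℕ) m →₀ k) :=
  Finsupp.supported k k
    {x : Idx n ({0, n} : Finset ℕ) m |
      ¬(x.V = Finset.range (n + 1) ∧ x.W = ({0, n} : Finset ℕ)) ∧
      ¬(x.V = (Finset.range (n + 1)).erase j ∧ x.W = ({0, n} : Finset ℕ))}

section Main

variable {k : Type*} [CommRing k] {n j : ℕ}

lemma bnd_mem_Csub (h0 : 0 < j) (hj : j < n) {m : ℕ}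
    (g : Idx n ({0, n} : Finset ℕ) (m + 1))
    (hg : ¬(g.V = Finset.range (n + 1) ∧ g.W = ({0, n} : Finset ℕ))) :
    bnd k g ∈ Csub k n j m := by
  rw [bnd]
  apply Submodule.sum_mem
  intro i _
  apply Submodule.smul_mem
  apply Submodule.sub_mem
  · apply Finsupp.single_mem_supported
    refine ⟨fun h => face_V_ne g i.1 i.2 h.1, fun h => ?_⟩
    have hs := face_special hj g i.1 i.2 h.1 h.2
    exact hg ⟨hs.2.1, hs.2.2⟩
  · apply Finsupp.single_mem_supported
    exact ⟨fun h => inert_W_ne g i.1 i.2 h.2, fun h => inert_W_ne g i.1 i.2 h.2⟩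

end Main


/-- For `0 < j < n`, `C_•` is a subcomplex of `dg(Δⁿ)_•` and the quotient
`dg(Δⁿ)_•/C_•` is isomorphic to the complex `k = k` concentrated in degrees
`n-1` and `n-2` with identity differential; in particular the quotient is
acyclic and degreewise free, and the inclusion `C_• ↪ dg(Δⁿ)_•` is a split
monomorphism of chain complexes. -/
theorem dg_simplex_quotient_split
    (k : Type*) [CommRing k] (n j : ℕ) (h0 : 0 < j) (hj : j < n) :
    -- C is a subcomplex
    (∀ (m : ℕ) (x : Idx n ({0, n} : Finset ℕ) (m + 1) →₀ k),
        x ∈ Csub k n j (m + 1) → Dmap k n {0, n} m x ∈ Csub k n j m) ∧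
    -- the quotient vanishes outside degrees n-1 and n-2
    (∀ m : ℕ, m ≠ n - 1 → m ≠ n - 2 →
        ∀ x : Idx n ({0, n} : Finset ℕ) m →₀ k, x ∈ Csub k n j m) ∧
    -- in degrees n-1 and n-2 the quotient is k, with identity differential
    (∀ m : ℕ, n = m + 2 →
        ∃ (e₁ : ((Idx n ({0, n} : Finset ℕ) (m + 1) →₀ k) ⧸ Csub k n j (m + 1)) ≃ₗ[k] k)
          (e₂ : ((Idx n ({0, n} : Finset ℕ) m →₀ k) ⧸ Csub k n j m) ≃ₗ[k] k),
          ∀ x : Idx n ({0, n} : Finset ℕ) (m + 1) →₀ k,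
            e₂ (Submodule.Quotient.mk (Dmap k n {0, n} m x)) =
              e₁ (Submodule.Quotient.mk x)) ∧
    -- the inclusion of C splits as a map of chain complexes
    (∃ π : ∀ m : ℕ,
        (Idx n ({0, n} : Finset ℕ) m →₀ k) →ₗ[k] (Idx n ({0, n} : Finset ℕ) m →₀ k),
        (∀ m x, π m x ∈ Csub k n j m) ∧
        (∀ m x, x ∈ Csub k n j m → π m x = x) ∧
        (∀ m x, π m (Dmap k n {0, n} m x) = Dmap k n {0, n} m (π (m + 1) x))) := by
  classical
  have hn : 0 < n := lt_trans h0 hj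
  set u : k := (-1 : k) ^ (j - 1) with hudef
  have hu : u * u = 1 := by
    rw [hudef, ← pow_add]
    exact Even.neg_one_pow ⟨j - 1, rfl⟩
  refine ⟨?_, ?_, ?_, ?_⟩
  · -- C is a subcomplex
    intro m x hx
    rw [Dmap, Finsupp.lsum_apply]
    apply Submodule.finsuppSum_mem
    intro g hgne
    have hgS := (Finsupp.mem_supported k x).mp hx (Finsupp.mem_support_iff.mpr hgne)
    rw [LinearMap.toSpanSingleton_apply]
    exact Submodule.smul_mem _ _ (bnd_mem_Csub h0 hj g hgS.1)
  · -- vanishing outside degrees n-1, n-2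
    intro m hm1 hm2 x
    apply (Finsupp.mem_supported k x).mpr
    intro g _
    exact ⟨fun h => hm1 (degA g hn h.1 h.2).symm,
      fun h => hm2 (degB g h0 hj h.1 h.2).symm⟩
  · -- the quotient complex
    intro m hm
    have hm1 : n - 1 = m + 1 := by omega
    have hm0 : n - 2 = m := by omega
    have hmem1 : ∀ g : Idx n ({0, n} : Finset ℕ) (m + 1),
        g ∉ {x : Idx n ({0, n} : Finset ℕ) (m + 1) |
          ¬(x.V = Finset.range (n + 1) ∧ x.W = ({0, n} : Finset ℕ)) ∧
          ¬(x.V = (Finset.range (n + 1)).erase j ∧ x.W = ({0, n} : Finset ℕ))}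
          ↔ g = idI hn hm1 := by
      intro g
      constructor
      · intro hg
        by_contra hne
        exact hg ⟨fun hA => hne (Idx.ext' hA.1 hA.2),
          fun hB => by have := degB g h0 hj hB.1 hB.2; omega⟩
      · intro hgeq h
        exact h.1 (by rw [hgeq]; exact ⟨rfl, rfl⟩)
    have hmem0 : ∀ g : Idx n ({0, n} : Finset ℕ) m,
        g ∉ {x : Idx n ({0, n} : Finset ℕ) m |
          ¬(x.V = Finset.range (n + 1) ∧ x.W = ({0, n} : Finset ℕ)) ∧
          ¬(x.V = (Finset.range (n + 1)).erase j ∧ x.W = ({0, n} : Finset ℕ))}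
          ↔ g = djI h0 hj hm0 := by
      intro g
      constructor
      · intro hg
        by_contra hne
        exact hg ⟨fun hA => by have := degA g hn hA.1 hA.2; omega,
          fun hB => hne (Idx.ext' hB.1 hB.2)⟩
      · intro hgeq h
        exact h.2 (by rw [hgeq]; exact ⟨rfl, rfl⟩)
    refine ⟨qEquiv _ (idI hn hm1) hmem1 1 (by ring),
      qEquiv _ (djI h0 hj hm0) hmem0 u hu, ?_⟩
    intro x
    show u * (Dmap k n {0, n} m x) (djI h0 hj hm0) = 1 * x (idI hn hm1)
    rw [Dmap_apply_dj hn h0 hj hm1 hm0, ← hudef, ← mul_assoc, hu, one_mul]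
  · -- the splitting
    refine ⟨fun m =>
      if h1 : n - 1 = m then
        LinearMap.id - (Finsupp.lsingle (idI hn h1)) ∘ₗ (Finsupp.lapply (idI hn h1))
      else if h2 : n - 2 = m then
        LinearMap.id - (LinearMap.toSpanSingleton k _
            (u • bnd k (idI hn (show n - 1 = m + 1 by omega)))) ∘ₗ
          (Finsupp.lapply (djI h0 hj h2))
      else LinearMap.id, ?_, ?_, ?_⟩
    · -- lands in C
      intro m x
      dsimp only
      split_ifs with h1 h2
      · apply (Finsupp.mem_supported' k _).mpr
        intro g hg
        have hgeq : g = idI hn h1 := by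
          by_contra hne
          exact hg ⟨fun hA => hne (Idx.ext' hA.1 hA.2),
            fun hB => by have := degB g h0 hj hB.1 hB.2; omega⟩
        rw [LinearMap.sub_apply, LinearMap.id_apply, LinearMap.comp_apply,
          Finsupp.lapply_apply, Finsupp.lsingle_apply, Finsupp.sub_apply, hgeq,
          Finsupp.single_eq_same, sub_self]
      · apply (Finsupp.mem_supported' k _).mpr
        intro g hg
        have hgeq : g = djI h0 hj h2 := by
          by_contra hne
          exact hg ⟨fun hA => by have := degA g hn hA.1 hA.2; omega,
            fun hB => hne (Idx.ext' hB.1 hB.2)⟩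
        rw [LinearMap.sub_apply, LinearMap.id_apply, LinearMap.comp_apply,
          Finsupp.lapply_apply, LinearMap.toSpanSingleton_apply, Finsupp.sub_apply,
          hgeq, Finsupp.smul_apply, Finsupp.smul_apply,
          bnd_apply_dj_id hn h0 hj, smul_eq_mul, smul_eq_mul, ← hudef, hu,
          mul_one, sub_self]
      · apply (Finsupp.mem_supported k _).mpr
        intro g _
        exact ⟨fun h => by have := degA g hn h.1 h.2; omega,
          fun h => by have := degB g h0 hj h.1 h.2; omega⟩
    · -- identity on C
      intro m x hx
      dsimp only
      split_ifs with h1 h2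
      · have hz : x (idI hn h1) = 0 :=
          (Finsupp.mem_supported' k x).mp hx _ (fun h => h.1 ⟨rfl, rfl⟩)
        rw [LinearMap.sub_apply, LinearMap.id_apply, LinearMap.comp_apply,
          Finsupp.lapply_apply, hz, Finsupp.lsingle_apply, Finsupp.single_zero,
          sub_zero]
      · have hz : x (djI h0 hj h2) = 0 :=
          (Finsupp.mem_supported' k x).mp hx _ (fun h => h.2 ⟨rfl, rfl⟩)
        rw [LinearMap.sub_apply, LinearMap.id_apply, LinearMap.comp_apply,
          Finsupp.lapply_apply, hz, LinearMap.toSpanSingleton_apply, zero_smul,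
          sub_zero]
      · rfl
    · -- chain map
      intro m x
      dsimp only
      by_cases hA1 : n - 1 = m + 1
      · rw [dif_pos hA1, dif_neg (show ¬ n - 1 = m by omega),
          dif_pos (show n - 2 = m by omega)]
        rw [LinearMap.sub_apply, LinearMap.id_apply, LinearMap.comp_apply,
          Finsupp.lapply_apply, LinearMap.toSpanSingleton_apply,
          Dmap_apply_dj hn h0 hj hA1, LinearMap.sub_apply, LinearMap.id_apply,
          LinearMap.comp_apply, Finsupp.lapply_apply, Finsupp.lsingle_apply,
          map_sub, Dmap_single, smul_smul]
        have hc : (-1 : k) ^ (j - 1) * x (idI hn hA1) * u = x (idI hn hA1) := by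
          rw [← hudef]
          linear_combination x (idI hn hA1) * hu
        rw [hc]
      · by_cases hB1 : n - 2 = m + 1
        · rw [dif_neg (show ¬ n - 1 = m by omega), dif_neg (show ¬ n - 2 = m by omega),
            dif_neg hA1, dif_pos hB1]
          rw [LinearMap.id_apply, LinearMap.sub_apply, LinearMap.id_apply,
            LinearMap.comp_apply, Finsupp.lapply_apply,
            LinearMap.toSpanSingleton_apply, map_sub, map_smul, map_smul, Dmap_bnd,
            smul_zero, smul_zero, sub_zero]
        · by_cases h1m : n - 1 = m
          · have hx0 : x = 0 := Finsupp.ext fun g => (idx_empty hn (by omega) g).elim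
            rw [hx0]
            simp
          · rw [dif_neg h1m, dif_neg (show ¬ n - 2 = m by omega), dif_neg hA1,
              dif_neg hB1]
            rfl
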